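/- For j = 0, 1 let u_j and v_j be nontrivial solutions of the same equation τ_{φ_j} u = 0 on I. Then for every c < d in I, |#_{(c,d)}(u₀, u₁) − #_{(c,d)}(v₀, v₁)| ≤ 4. -/

import Mathlib

open MeasureTheory Real Set

/-- The real matrix representing `(1/i)·σ₂`. -/
noncomputable def Jmat : Matrix (Fin 2) (Fin 2) ℝ := !![0, -1; 1, 0]

/-- `u` is locally absolutely continuous on `I` with a.e. derivative `u'`. -/
def IsACDeriv (I : Set ℝ) (u u' : ℝ → Fin 2 → ℝ) : Prop :=
  ContinuousOn u I ∧
  ∀ c ∈ I, ∀ x ∈ I, ∀ i : Fin 2,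
    IntervalIntegrable (fun t => u' t i) volume c x ∧
    u x i = u c i + ∫ t in c..x, u' t i

/-- `u` is a solution of the Dirac equation `τ_φ u = λ u` on `I`. -/
def IsDiracSolution (I : Set ℝ) (φ : ℝ → Matrix (Fin 2) (Fin 2) ℝ) (lam : ℝ)
    (u : ℝ → Fin 2 → ℝ) : Prop :=
  ∃ u' : ℝ → Fin 2 → ℝ, IsACDeriv I u u' ∧
    ∀ᵐ x ∂volume, x ∈ I → Jmat.mulVec (u' x) + (φ x).mulVec (u x) = lam • u x

/-- `θ` is a Prüfer angle for the nowhere vanishing continuous function `u` on `I`. -/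
def IsPruefer (I : Set ℝ) (u : ℝ → Fin 2 → ℝ) (θ : ℝ → ℝ) : Prop :=
  ContinuousOn θ I ∧
  ∀ x ∈ I, ∃ ρ : ℝ, 0 < ρ ∧ u x 0 = ρ * Real.sin (θ x) ∧ u x 1 = ρ * Real.cos (θ x)

/-- The weighted number of sign flips `#_{(c,d)}(u,v)` computed from Prüfer angles. -/
noncomputable def numFlips (θu θv : ℝ → ℝ) (c d : ℝ) : ℤ :=
  ⌈(θv d - θu d) / Real.pi⌉ - ⌊(θv c - θu c) / Real.pi⌋ - 1

lemma triangle_swap (f g : ℝ → ℝ) {c d : ℝ}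
    (hf : IntegrableOn f (Ioc c d)) (hg : IntegrableOn g (Ioc c d)) :
    ∫ x in Ioc c d, g x * ∫ t in Ioc c x, f t
      = ∫ x in Ioc c d, f x * ∫ t in Ioc x d, g t := by
  set μ := volume.restrict (Ioc c d) with hμ
  have hS : MeasurableSet {p : ℝ × ℝ | p.2 ≤ p.1} := measurableSet_le measurable_snd measurable_fst
  have hK : Integrable (fun p : ℝ × ℝ => g p.1 * f p.2) (μ.prod μ) := hg.mul_prod hf
  have hKi : Integrable ({p : ℝ × ℝ | p.2 ≤ p.1}.indicator (fun p => g p.1 * f p.2)) (μ.prod μ) :=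
    hK.indicator hS
  have swap := MeasureTheory.integral_integral_swap
    (f := fun x t => {p : ℝ × ℝ | p.2 ≤ p.1}.indicator (fun p => g p.1 * f p.2) (x, t))
    (μ := μ) (ν := μ) (by exact hKi)
  calc ∫ x in Ioc c d, g x * ∫ t in Ioc c x, f t
      = ∫ x, ∫ t, {p : ℝ × ℝ | p.2 ≤ p.1}.indicator (fun p => g p.1 * f p.2) (x, t) ∂μ ∂μ := by
        rw [hμ]
        refine (setIntegral_congr_fun measurableSet_Ioc (fun x hx => ?_)).symm
        have h1 : ∀ t : ℝ, {p : ℝ × ℝ | p.2 ≤ p.1}.indicator (fun p => g p.1 * f p.2) (x, t)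
            = (Iic x).indicator (fun t => g x * f t) t := by
          intro t
          by_cases h : t ≤ x <;> simp [Set.indicator, h]
        simp_rw [h1]
        rw [setIntegral_indicator measurableSet_Iic, Ioc_inter_Iic,
          min_eq_right hx.2, integral_const_mul]
    _ = ∫ t, ∫ x, {p : ℝ × ℝ | p.2 ≤ p.1}.indicator (fun p => g p.1 * f p.2) (x, t) ∂μ ∂μ := swap
    _ = ∫ x in Ioc c d, f x * ∫ t in Ioc x d, g t := by
        rw [hμ]
        refine setIntegral_congr_fun measurableSet_Ioc (fun t ht => ?_)
        have h1 : ∀ x : ℝ, {p : ℝ × ℝ | p.2 ≤ p.1}.indicator (fun p => g p.1 * f p.2) (x, t)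
            = (Ici t).indicator (fun x => g x * f t) x := by
          intro x
          by_cases h : t ≤ x <;> simp [Set.indicator, h]
        simp_rw [h1]
        rw [setIntegral_indicator measurableSet_Ici]
        have h2 : Ioc c d ∩ Ici t = Icc t d := by
          ext y
          simp only [mem_inter_iff, mem_Ioc, mem_Ici, mem_Icc]
          constructor
          · rintro ⟨⟨_, h2⟩, h3⟩; exact ⟨h3, h2⟩
          · rintro ⟨h1', h2⟩; exact ⟨⟨lt_of_lt_of_le ht.1 h1', h2⟩, h1'⟩
        rw [h2, integral_Icc_eq_integral_Ioc]
        simp_rw [mul_comm (g _) (f t)]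
        rw [integral_const_mul]


lemma parts (f g F G : ℝ → ℝ) {c d : ℝ} (hcd : c ≤ d)
    (hf : IntervalIntegrable f volume c d) (hg : IntervalIntegrable g volume c d)
    (hF : ∀ x ∈ Icc c d, F x = F c + ∫ t in c..x, f t)
    (hG : ∀ x ∈ Icc c d, G x = G c + ∫ t in c..x, g t) :
    F d * G d - F c * G c = ∫ x in c..d, (F x * g x + f x * G x) := by
  have hfI : IntegrableOn f (Ioc c d) := hf.1
  have hgI : IntegrableOn g (Ioc c d) := hg.1
  have hfIcc : IntegrableOn f (Icc c d) := (integrableOn_Icc_iff_integrableOn_Ioc).2 hfI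
  have hgIcc : IntegrableOn g (Icc c d) := (integrableOn_Icc_iff_integrableOn_Ioc).2 hgI
  have hA : ContinuousOn (fun x => ∫ t in Ioc c x, f t) (Icc c d) :=
    intervalIntegral.continuousOn_primitive hfIcc
  have hB : ContinuousOn (fun x => ∫ t in Ioc c x, g t) (Icc c d) :=
    intervalIntegral.continuousOn_primitive hgIcc
  have huIcc : Set.uIcc c d = Icc c d := uIcc_of_le hcd
  have hsplit : ∀ x ∈ Icc c d,
      (∫ t in Ioc c x, g t) + (∫ t in Ioc x d, g t) = ∫ t in Ioc c d, g t := by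
    intro x hx
    rw [← setIntegral_union (Ioc_disjoint_Ioc_of_le le_rfl) measurableSet_Ioc
        (hgI.mono_set (Ioc_subset_Ioc_right hx.2)) (hgI.mono_set (Ioc_subset_Ioc_left hx.1)),
      Ioc_union_Ioc_eq_Ioc hx.1 hx.2]
  have hfB : IntervalIntegrable (fun x => f x * ∫ t in Ioc c x, g t) volume c d :=
    hf.mul_continuousOn (g := fun x => ∫ t in Ioc c x, g t) (by rw [huIcc]; exact hB)
  have hgA : IntervalIntegrable (fun x => g x * ∫ t in Ioc c x, f t) volume c d :=
    hg.mul_continuousOn (g := fun x => ∫ t in Ioc c x, f t) (by rw [huIcc]; exact hA)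
  have hB' : ContinuousOn (fun x => ∫ t in Ioc x d, g t) (Icc c d) :=
    ContinuousOn.congr ((continuousOn_const (c := ∫ t in Ioc c d, g t)).sub hB)
      (fun x hx => by have := hsplit x hx; simp only [Pi.sub_apply]; linarith)
  have hfB' : IntervalIntegrable (fun x => f x * ∫ t in Ioc x d, g t) volume c d :=
    hf.mul_continuousOn (g := fun x => ∫ t in Ioc x d, g t) (by rw [huIcc]; exact hB')
  -- the triangle identity
  have tri : (∫ x in Ioc c d, f x * ∫ t in Ioc c x, g t)
      + (∫ x in Ioc c d, g x * ∫ t in Ioc c x, f t)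
      = (∫ x in Ioc c d, f x) * (∫ x in Ioc c d, g x) := by
    rw [triangle_swap f g hfI hgI, ← integral_add
      (by simpa [IntegrableOn] using hfB.1) (by simpa [IntegrableOn] using hfB'.1)]
    rw [← integral_mul_const]
    refine setIntegral_congr_fun measurableSet_Ioc (fun x hx => ?_)
    have := hsplit x (Ioc_subset_Icc_self hx)
    rw [← this]; ring
  -- now the main computation
  have hFg : IntervalIntegrable (fun x => F x * g x) volume c d := by
    have hFc : ContinuousOn F (Set.uIcc c d) := by
      rw [huIcc]
      refine ContinuousOn.congr ((continuousOn_const (c := F c)).add hA) (fun x hx => ?_)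
      rw [hF x hx, intervalIntegral.integral_of_le hx.1]; rfl
    exact hg.continuousOn_mul hFc
  have hfG : IntervalIntegrable (fun x => f x * G x) volume c d := by
    have hGc : ContinuousOn G (Set.uIcc c d) := by
      rw [huIcc]
      refine ContinuousOn.congr ((continuousOn_const (c := G c)).add hB) (fun x hx => ?_)
      rw [hG x hx, intervalIntegral.integral_of_le hx.1]; rfl
    exact hf.mul_continuousOn hGc
  rw [intervalIntegral.integral_add hFg hfG]
  rw [intervalIntegral.integral_of_le hcd, intervalIntegral.integral_of_le hcd]
  have e1 : ∫ x in Ioc c d, F x * g x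
      = F c * (∫ x in Ioc c d, g x) + ∫ x in Ioc c d, g x * ∫ t in Ioc c x, f t := by
    rw [← integral_const_mul, ← integral_add (by simpa [IntegrableOn] using (hg.const_mul (F c)).1)
      (by simpa [IntegrableOn] using hgA.1)]
    refine setIntegral_congr_fun measurableSet_Ioc (fun x hx => ?_)
    rw [hF x (Ioc_subset_Icc_self hx), intervalIntegral.integral_of_le hx.1.le]
    ring
  have e2 : ∫ x in Ioc c d, f x * G x
      = G c * (∫ x in Ioc c d, f x) + ∫ x in Ioc c d, f x * ∫ t in Ioc c x, g t := by
    rw [← integral_const_mul, ← integral_add (by simpa [IntegrableOn] using (hf.const_mul (G c)).1)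
      (by simpa [IntegrableOn] using hfB.1)]
    refine setIntegral_congr_fun measurableSet_Ioc (fun x hx => ?_)
    rw [hG x (Ioc_subset_Icc_self hx), intervalIntegral.integral_of_le hx.1.le]
    ring
  have hFd := hF d ⟨hcd, le_rfl⟩
  have hGd := hG d ⟨hcd, le_rfl⟩
  rw [intervalIntegral.integral_of_le hcd] at hFd hGd
  rw [e1, e2, hFd, hGd]
  nlinarith [tri]


lemma wronskian_eq {I : Set ℝ} {φ : ℝ → Matrix (Fin 2) (Fin 2) ℝ}
    (hs : ∀ x ∈ I, (φ x).IsSymm)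
    {u v : ℝ → Fin 2 → ℝ}
    (hu : IsDiracSolution I φ 0 u) (hv : IsDiracSolution I φ 0 v)
    {c d : ℝ} (hc : c ∈ I) (hd : d ∈ I) (hcd : c ≤ d) (hsub : Icc c d ⊆ I) :
    u d 0 * v d 1 - u d 1 * v d 0 = u c 0 * v c 1 - u c 1 * v c 0 := by
  obtain ⟨u', ⟨hu_cont, hu_ac⟩, hu_ode⟩ := hu
  obtain ⟨v', ⟨hv_cont, hv_ac⟩, hv_ode⟩ := hv
  have huIcc : Set.uIcc c d = Icc c d := uIcc_of_le hcd
  -- integrability of derivative components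
  have hiu : ∀ i, IntervalIntegrable (fun t => u' t i) volume c d := fun i => (hu_ac c hc d hd i).1
  have hiv : ∀ i, IntervalIntegrable (fun t => v' t i) volume c d := fun i => (hv_ac c hc d hd i).1
  -- representations
  have hru : ∀ i, ∀ x ∈ Icc c d, u x i = u c i + ∫ t in c..x, u' t i :=
    fun i x hx => (hu_ac c hc x (hsub hx) i).2
  have hrv : ∀ i, ∀ x ∈ Icc c d, v x i = v c i + ∫ t in c..x, v' t i :=
    fun i x hx => (hv_ac c hc x (hsub hx) i).2
  have P1 := parts (fun t => u' t 0) (fun t => v' t 1) (fun t => u t 0) (fun t => v t 1)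
    hcd (hiu 0) (hiv 1) (hru 0) (hrv 1)
  have P2 := parts (fun t => u' t 1) (fun t => v' t 0) (fun t => u t 1) (fun t => v t 0)
    hcd (hiu 1) (hiv 0) (hru 1) (hrv 0)
  -- continuity of components on [[c,d]]
  have hcomp : ∀ (w : ℝ → Fin 2 → ℝ), ContinuousOn w I → ∀ i : Fin 2,
      ContinuousOn (fun x => w x i) (Set.uIcc c d) := by
    intro w hw i
    rw [huIcc]
    exact ((continuous_apply i).comp_continuousOn hw).mono hsub
  -- integrability of the integrands
  have hint1 : IntervalIntegrable (fun x => u x 0 * v' x 1 + u' x 0 * v x 1) volume c d :=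
    ((hiv 1).continuousOn_mul (hcomp u hu_cont 0)).add
      ((hiu 0).mul_continuousOn (hcomp v hv_cont 1))
  have hint2 : IntervalIntegrable (fun x => u x 1 * v' x 0 + u' x 1 * v x 0) volume c d :=
    ((hiv 0).continuousOn_mul (hcomp u hu_cont 1)).add
      ((hiu 1).mul_continuousOn (hcomp v hv_cont 0))
  have key : (∫ x in c..d, (u x 0 * v' x 1 + u' x 0 * v x 1))
      - (∫ x in c..d, (u x 1 * v' x 0 + u' x 1 * v x 0)) = 0 := by
    rw [← intervalIntegral.integral_sub hint1 hint2]
    rw [show (0:ℝ) = ∫ _x in c..d, (0:ℝ) by simp]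
    apply intervalIntegral.integral_congr_ae
    filter_upwards [hu_ode, hv_ode] with x h1 h2 hx
    have hxI : x ∈ I := hsub (Ioc_subset_Icc_self (by rwa [Set.uIoc_of_le hcd] at hx))
    have eu0 := congrFun (h1 hxI) 0
    have eu1 := congrFun (h1 hxI) 1
    have ev0 := congrFun (h2 hxI) 0
    have ev1 := congrFun (h2 hxI) 1
    simp [Jmat, Matrix.mulVec, dotProduct, Matrix.vecHead, Matrix.vecTail, Fin.sum_univ_two] at eu0 eu1 ev0 ev1
    have esym : φ x 1 0 = φ x 0 1 := (hs x hxI).apply 0 1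
    linear_combination (-(u x 0)) * ev0 + v x 1 * eu1 + (-(u x 1)) * ev1 + v x 0 * eu0
      + (-(u x 0 * v x 1 - u x 1 * v x 0)) * esym
  linarith [P1, P2, key]


lemma abs_delta_lt_pi {c d : ℝ} (hcd : c ≤ d) (Δ : ℝ → ℝ)
    (hΔ : ContinuousOn Δ (Icc c d))
    (h0 : (∃ x ∈ Icc c d, Real.sin (Δ x) = 0) → ∀ x ∈ Icc c d, Real.sin (Δ x) = 0) :
    |Δ d - Δ c| < π := by
  by_contra hcon
  push_neg at hcon
  set m := min (Δ c) (Δ d) with hm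
  set M := max (Δ c) (Δ d) with hM
  have hπ := Real.pi_pos
  have hMm : m + π ≤ M := by
    rcases le_total (Δ c) (Δ d) with hl | hl
    · rw [hm, hM, min_eq_left hl, max_eq_right hl]
      rcases abs_cases (Δ d - Δ c) with ⟨he, _⟩ | ⟨he, _⟩ <;> linarith
    · rw [hm, hM, min_eq_right hl, max_eq_left hl]
      rcases abs_cases (Δ d - Δ c) with ⟨he, _⟩ | ⟨he, _⟩ <;> linarith
  have key : ∀ t, m ≤ t → t ≤ M → ∃ x ∈ Icc c d, Δ x = t := by
    intro t h1 h2
    rcases le_total (Δ c) (Δ d) with hl | hl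
    · have := intermediate_value_Icc hcd hΔ
      obtain ⟨x, hx, hxe⟩ := this (by
        rw [hm, min_eq_left hl] at h1; rw [hM, max_eq_right hl] at h2
        exact mem_Icc.2 ⟨h1, h2⟩)
      exact ⟨x, hx, hxe⟩
    · have := intermediate_value_Icc' hcd hΔ
      obtain ⟨x, hx, hxe⟩ := this (by
        rw [hm, min_eq_right hl] at h1; rw [hM, max_eq_left hl] at h2
        exact mem_Icc.2 ⟨h1, h2⟩)
      exact ⟨x, hx, hxe⟩
  set k := ⌈m / π⌉ with hk
  have hk1 : m ≤ k * π := (div_le_iff₀ hπ).1 (Int.le_ceil _)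
  have hk2 : (k : ℝ) * π ≤ m + π := by
    have h' : (k : ℝ) < m / π + 1 := Int.ceil_lt_add_one (m / π)
    have h2 := mul_lt_mul_of_pos_right h' hπ
    have hmm : (m / π + 1) * π = m + π := by field_simp
    rw [hmm] at h2
    exact h2.le
  obtain ⟨x₁, hx₁, hΔ₁⟩ := key (k * π) hk1 (hk2.trans hMm)
  have hs₁ : Real.sin (Δ x₁) = 0 := by rw [hΔ₁]; exact Real.sin_int_mul_pi k
  -- choose the half-integer point
  have hhalf : ∃ t, m ≤ t ∧ t ≤ M ∧ (t = k * π + π / 2 ∨ t = k * π - π / 2) := by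
    by_cases hcase : (k : ℝ) * π + π / 2 ≤ M
    · exact ⟨k * π + π / 2, by linarith, hcase, Or.inl rfl⟩
    · refine ⟨k * π - π / 2, by push_neg at hcase; linarith, by linarith, Or.inr rfl⟩
  obtain ⟨t, ht1, ht2, ht3⟩ := hhalf
  obtain ⟨x₂, hx₂, hΔ₂⟩ := key t ht1 ht2
  have hs₂ : Real.sin (Δ x₂) = 0 := h0 ⟨x₁, hx₁, hs₁⟩ x₂ hx₂
  rw [hΔ₂, Real.sin_eq_zero_iff] at hs₂
  obtain ⟨n, hn⟩ := hs₂
  have hπ0 : (π : ℝ) ≠ 0 := Real.pi_ne_zero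
  rcases ht3 with rfl | rfl
  · have : ((2 * n : ℤ) : ℝ) = ((2 * k + 1 : ℤ) : ℝ) := by
      push_cast
      have : (n : ℝ) * π = k * π + π / 2 := hn
      field_simp at this ⊢
      nlinarith [this]
    have h2 : (2 * n : ℤ) = 2 * k + 1 := by exact_mod_cast this
    omega
  · have : ((2 * n : ℤ) : ℝ) = ((2 * k - 1 : ℤ) : ℝ) := by
      push_cast
      have : (n : ℝ) * π = k * π - π / 2 := hn
      field_simp at this ⊢
      nlinarith [this]
    have h2 : (2 * n : ℤ) = 2 * k - 1 := by exact_mod_cast this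
    omega


lemma pruefer_sep {I : Set ℝ} {φ : ℝ → Matrix (Fin 2) (Fin 2) ℝ}
    (hs : ∀ x ∈ I, (φ x).IsSymm)
    {u v : ℝ → Fin 2 → ℝ} {θu θv : ℝ → ℝ}
    (hu : IsDiracSolution I φ 0 u) (hv : IsDiracSolution I φ 0 v)
    (hθu : IsPruefer I u θu) (hθv : IsPruefer I v θv)
    {c d : ℝ} (hc : c ∈ I) (hd : d ∈ I) (hcd : c ≤ d) (hsub : Icc c d ⊆ I) :
    |(θu d - θv d) - (θu c - θv c)| < π := by
  set Δ : ℝ → ℝ := fun x => θu x - θv x with hΔdef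
  have hΔc : ContinuousOn Δ (Icc c d) := ((hθu.1).sub (hθv.1)).mono hsub
  set W : ℝ → ℝ := fun x => u x 0 * v x 1 - u x 1 * v x 0 with hWdef
  have hWconst : ∀ x ∈ Icc c d, W x = W c := by
    intro x hx
    exact wronskian_eq hs hu hv hc (hsub hx) hx.1 (fun y hy => hsub ⟨hy.1, hy.2.trans hx.2⟩)
  have hWrep : ∀ x ∈ Icc c d, ∃ ρ : ℝ, 0 < ρ ∧ W x = ρ * Real.sin (Δ x) := by
    intro x hx
    obtain ⟨ρ1, hρ1, hu0, hu1⟩ := hθu.2 x (hsub hx)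
    obtain ⟨ρ2, hρ2, hv0, hv1⟩ := hθv.2 x (hsub hx)
    refine ⟨ρ1 * ρ2, mul_pos hρ1 hρ2, ?_⟩
    rw [hWdef]
    simp only [hΔdef]
    rw [Real.sin_sub]
    simp only [hu0, hu1, hv0, hv1]
    ring
  have h0 : (∃ x ∈ Icc c d, Real.sin (Δ x) = 0) → ∀ x ∈ Icc c d, Real.sin (Δ x) = 0 := by
    rintro ⟨x₀, hx₀, hsx₀⟩ x hx
    obtain ⟨ρ₀, hρ₀, hW₀⟩ := hWrep x₀ hx₀
    have hWc0 : W c = 0 := by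
      rw [← hWconst x₀ hx₀, hW₀, hsx₀, mul_zero]
    obtain ⟨ρ, hρ, hW⟩ := hWrep x hx
    have : ρ * Real.sin (Δ x) = 0 := by rw [← hW, hWconst x hx, hWc0]
    exact (mul_eq_zero.1 this).resolve_left hρ.ne'
  exact abs_delta_lt_pi hcd Δ hΔc h0


theorem numFlips_independence_of_solutions
    (I : Set ℝ) (hIo : IsOpen I) (hIc : I.OrdConnected)
    (φ₀ φ₁ : ℝ → Matrix (Fin 2) (Fin 2) ℝ)
    (hs₀ : ∀ x ∈ I, (φ₀ x).IsSymm) (hs₁ : ∀ x ∈ I, (φ₁ x).IsSymm)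
    (hi₀ : ∀ i j : Fin 2, LocallyIntegrableOn (fun x => φ₀ x i j) I volume)
    (hi₁ : ∀ i j : Fin 2, LocallyIntegrableOn (fun x => φ₁ x i j) I volume)
    (u₀ v₀ u₁ v₁ : ℝ → Fin 2 → ℝ)
    (hu₀ : IsDiracSolution I φ₀ 0 u₀) (hv₀ : IsDiracSolution I φ₀ 0 v₀)
    (hu₁ : IsDiracSolution I φ₁ 0 u₁) (hv₁ : IsDiracSolution I φ₁ 0 v₁)
    (hu₀nt : ∀ x ∈ I, u₀ x ≠ 0) (hv₀nt : ∀ x ∈ I, v₀ x ≠ 0)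
    (hu₁nt : ∀ x ∈ I, u₁ x ≠ 0) (hv₁nt : ∀ x ∈ I, v₁ x ≠ 0)
    (θu₀ θv₀ θu₁ θv₁ : ℝ → ℝ)
    (hθu₀ : IsPruefer I u₀ θu₀) (hθv₀ : IsPruefer I v₀ θv₀)
    (hθu₁ : IsPruefer I u₁ θu₁) (hθv₁ : IsPruefer I v₁ θv₁)
    (c d : ℝ) (hc : c ∈ I) (hd : d ∈ I) (hcd : c < d) :
    |numFlips θu₀ θu₁ c d - numFlips θv₀ θv₁ c d| ≤ 4 := by
  have hsub : Icc c d ⊆ I := hIc.out hc hd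
  have sep0 := pruefer_sep hs₀ hu₀ hv₀ hθu₀ hθv₀ hc hd hcd.le hsub
  have sep1 := pruefer_sep hs₁ hu₁ hv₁ hθu₁ hθv₁ hc hd hcd.le hsub
  set A := θu₁ d - θu₀ d with hA
  set B := θu₁ c - θu₀ c with hB
  set A' := θv₁ d - θv₀ d with hA'
  set B' := θv₁ c - θv₀ c with hB'
  have h1 : |(A - A') - (B - B')| < 2 * π := by
    have he : (A - A') - (B - B') =
        ((θu₁ d - θv₁ d) - (θu₁ c - θv₁ c)) - ((θu₀ d - θv₀ d) - (θu₀ c - θv₀ c)) := by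
      rw [hA, hB, hA', hB']; ring
    rw [he]
    rcases abs_lt.1 sep0 with ⟨g1, g2⟩
    rcases abs_lt.1 sep1 with ⟨g3, g4⟩
    rw [abs_lt]
    constructor <;> linarith
  have hπ := Real.pi_pos
  have key : |((numFlips θu₀ θu₁ c d - numFlips θv₀ θv₁ c d : ℤ) : ℝ)| < 4 := by
    simp only [numFlips]
    push_cast
    have c1 : A / π ≤ (⌈A / π⌉ : ℝ) := Int.le_ceil _
    have c2 : (⌈A / π⌉ : ℝ) < A / π + 1 := Int.ceil_lt_add_one _
    have c3 : A' / π ≤ (⌈A' / π⌉ : ℝ) := Int.le_ceil _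
    have c4 : (⌈A' / π⌉ : ℝ) < A' / π + 1 := Int.ceil_lt_add_one _
    have f1 : (⌊B / π⌋ : ℝ) ≤ B / π := Int.floor_le _
    have f2 : B / π - 1 < (⌊B / π⌋ : ℝ) := Int.sub_one_lt_floor _
    have f3 : (⌊B' / π⌋ : ℝ) ≤ B' / π := Int.floor_le _
    have f4 : B' / π - 1 < (⌊B' / π⌋ : ℝ) := Int.sub_one_lt_floor _
    have hdiv : |A / π - A' / π - (B / π - B' / π)| < 2 := by
      have he : A / π - A' / π - (B / π - B' / π) = ((A - A') - (B - B')) / π := by ring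
      rw [he, abs_div, abs_of_pos hπ, div_lt_iff₀ hπ]
      linarith [h1]
    rcases abs_lt.1 hdiv with ⟨hd1, hd2⟩
    rw [abs_lt]
    constructor <;> nlinarith
  have h4 : |numFlips θu₀ θu₁ c d - numFlips θv₀ θv₁ c d| < 4 := by
    exact_mod_cast (by rwa [← Int.cast_abs] at key :
      ((|numFlips θu₀ θu₁ c d - numFlips θv₀ θv₁ c d| : ℤ) : ℝ) < 4)
  omega
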